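/- Let a, b > 0 and v ∈ ℝ², and define C : ℝ × ℝ → ℝ² by C(θ, t) = e^{−t/9}·(a·cos θ, b·sin θ) + v. Let D₁ = det(∂_θC, ∂²_θC), D₂ = det(∂_θC, ∂³_θC), D₃ = det(∂_θC, ∂⁴_θC), D₄ = det(∂²_θC, ∂³_θC). Then for all (θ, t): (i) (3·D₁·D₃ − 5·D₂² + 12·D₁·D₄)/D₁² = 9, so the fully affine metric g = √((3D₁D₃ − 5D₂² + 12D₁D₄)/D₁²) equals 3 identically; and (ii) ∂_t C(θ, t) = (1/9)·∂²_θ C(θ, t), i.e. C satisfies the fully affine heat flow ∂_t C = g^{−1}∂_θ(g^{−1}∂_θ C). Hence the ellipse is a shrinking soliton of the fully affine heat flow. -/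

import Mathlib

/-- Determinant of the 2×2 matrix with columns `u, w ∈ ℝ²`. -/
def det2 (u w : ℝ × ℝ) : ℝ := u.1 * w.2 - u.2 * w.1

private lemma derivP (c1 c2 d1 d2 p q : ℝ) :
    deriv (fun x : ℝ => (c1 * Real.cos x + c2 * Real.sin x + p,
        d1 * Real.cos x + d2 * Real.sin x + q)) =
    fun x : ℝ => (c2 * Real.cos x + (-c1) * Real.sin x + 0,
        d2 * Real.cos x + (-d1) * Real.sin x + 0) := by
  funext x
  have h1 : HasDerivAt (fun x : ℝ => c1 * Real.cos x + c2 * Real.sin x + p)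
      (c2 * Real.cos x + (-c1) * Real.sin x + 0) x := by
    have := (((Real.hasDerivAt_cos x).const_mul c1).add
      ((Real.hasDerivAt_sin x).const_mul c2)).add_const p
    exact this.congr_deriv (by ring)
  have h2 : HasDerivAt (fun x : ℝ => d1 * Real.cos x + d2 * Real.sin x + q)
      (d2 * Real.cos x + (-d1) * Real.sin x + 0) x := by
    have := (((Real.hasDerivAt_cos x).const_mul d1).add
      ((Real.hasDerivAt_sin x).const_mul d2)).add_const q
    exact this.congr_deriv (by ring)
  exact (h1.prodMk h2).deriv

/-- Example 7.1: the shrinking family of ellipses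
`C(θ,t) = e^{−t/9}(a cos θ, b sin θ) + v` has fully affine metric `g ≡ 3` and
satisfies the fully affine heat flow `∂_t C = (1/9)∂²_θ C = ∂²C/∂ξ²`. -/
theorem ellipse_shrinking_soliton
    (a b : ℝ) (ha : 0 < a) (hb : 0 < b) (v : ℝ × ℝ) (θ t : ℝ) :
    let C : ℝ → ℝ → ℝ × ℝ := fun θ' t' =>
      (Real.exp (-t' / 9) * (a * Real.cos θ') + v.1,
       Real.exp (-t' / 9) * (b * Real.sin θ') + v.2)
    let D1 := det2 (deriv (fun θ' => C θ' t) θ) (iteratedDeriv 2 (fun θ' => C θ' t) θ)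
    let D2 := det2 (deriv (fun θ' => C θ' t) θ) (iteratedDeriv 3 (fun θ' => C θ' t) θ)
    let D3 := det2 (deriv (fun θ' => C θ' t) θ) (iteratedDeriv 4 (fun θ' => C θ' t) θ)
    let D4 := det2 (iteratedDeriv 2 (fun θ' => C θ' t) θ) (iteratedDeriv 3 (fun θ' => C θ' t) θ)
    ((3 * D1 * D3 - 5 * D2 ^ 2 + 12 * D1 * D4) / D1 ^ 2 = 9 ∧
      Real.sqrt ((3 * D1 * D3 - 5 * D2 ^ 2 + 12 * D1 * D4) / D1 ^ 2) = 3) ∧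
    deriv (fun t' => C θ t') t = (1 / 9 : ℝ) • iteratedDeriv 2 (fun θ' => C θ' t) θ := by
  intro C D1 D2 D3 D4
  set e := Real.exp (-t / 9) with he
  have hepos : 0 < e := Real.exp_pos _
  have hC : (fun θ' => C θ' t) = fun x : ℝ =>
      ((e * a) * Real.cos x + 0 * Real.sin x + v.1,
       0 * Real.cos x + (e * b) * Real.sin x + v.2) := by
    funext x
    simp only [C, Prod.mk.injEq]
    constructor <;> ring
  have h1 : deriv (fun θ' => C θ' t) = fun x : ℝ =>
      (0 * Real.cos x + (-(e * a)) * Real.sin x + 0,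
       (e * b) * Real.cos x + (-0) * Real.sin x + 0) := by
    rw [hC, derivP]
  have h2 : iteratedDeriv 2 (fun θ' => C θ' t) = fun x : ℝ =>
      ((-(e * a)) * Real.cos x + (-0) * Real.sin x + 0,
       (-0) * Real.cos x + (-(e * b)) * Real.sin x + 0) := by
    rw [show (2 : ℕ) = 1 + 1 from rfl, iteratedDeriv_succ, iteratedDeriv_one, h1, derivP]
  have h3 : iteratedDeriv 3 (fun θ' => C θ' t) = fun x : ℝ =>
      ((-0) * Real.cos x + (-(-(e * a))) * Real.sin x + 0,
       (-(e * b)) * Real.cos x + (- -0) * Real.sin x + 0) := by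
    rw [show (3 : ℕ) = 2 + 1 from rfl, iteratedDeriv_succ, h2, derivP]
  have h4 : iteratedDeriv 4 (fun θ' => C θ' t) = fun x : ℝ =>
      ((-(-(e * a))) * Real.cos x + (- -0) * Real.sin x + 0,
       (- -0) * Real.cos x + (-(-(e * b))) * Real.sin x + 0) := by
    rw [show (4 : ℕ) = 3 + 1 from rfl, iteratedDeriv_succ, h3, derivP]
  have hsc : Real.sin θ ^ 2 + Real.cos θ ^ 2 = 1 := Real.sin_sq_add_cos_sq θ
  have hD1 : D1 = e ^ 2 * a * b := by
    simp only [D1, h1, h2, det2]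
    linear_combination (e ^ 2 * a * b) * hsc
  have hD2 : D2 = 0 := by
    simp only [D2, h1, h3, det2]; ring
  have hD3 : D3 = -(e ^ 2 * a * b) := by
    simp only [D3, h1, h4, det2]
    linear_combination (-(e ^ 2 * a * b)) * hsc
  have hD4 : D4 = e ^ 2 * a * b := by
    simp only [D4, h2, h3, det2]
    linear_combination (e ^ 2 * a * b) * hsc
  have hD1ne : D1 ≠ 0 := by
    rw [hD1]; positivity
  have hkey : (3 * D1 * D3 - 5 * D2 ^ 2 + 12 * D1 * D4) / D1 ^ 2 = 9 := by
    rw [hD1, hD2, hD3, hD4]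
    field_simp
    ring
  refine ⟨⟨hkey, ?_⟩, ?_⟩
  · rw [hkey, show (9 : ℝ) = 3 ^ 2 by norm_num, Real.sqrt_sq (by norm_num)]
  · -- t-derivative
    have hexp : HasDerivAt (fun t' : ℝ => Real.exp (-t' / 9))
        (Real.exp (-t / 9) * (-(1 / 9))) t := by
      have hin : HasDerivAt (fun t' : ℝ => -t' / 9) (-(1 / 9)) t := by
        have := ((hasDerivAt_id t).neg.div_const 9)
        exact this.congr_deriv (by norm_num)
      exact hin.exp
    have hc1 : HasDerivAt (fun t' : ℝ => Real.exp (-t' / 9) * (a * Real.cos θ) + v.1)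
        (Real.exp (-t / 9) * (-(1 / 9)) * (a * Real.cos θ)) t :=
      (hexp.mul_const _).add_const _
    have hc2 : HasDerivAt (fun t' : ℝ => Real.exp (-t' / 9) * (b * Real.sin θ) + v.2)
        (Real.exp (-t / 9) * (-(1 / 9)) * (b * Real.sin θ)) t :=
      (hexp.mul_const _).add_const _
    have hder : deriv (fun t' => C θ t') t =
        (Real.exp (-t / 9) * (-(1 / 9)) * (a * Real.cos θ),
         Real.exp (-t / 9) * (-(1 / 9)) * (b * Real.sin θ)) := (hc1.prodMk hc2).deriv
    rw [hder, h2]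
    simp only [Prod.smul_mk, smul_eq_mul, Prod.mk.injEq, ← he]
    constructor <;> ring
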